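/- If the system is globally hypoelliptic at the Fourier coefficient level, then it is globally solvable at the Fourier coefficient level. -/

import Mathlib

open Real

/-- Euclidean norm of an integer vector `τ ∈ ℤ^m`. -/
noncomputable def eNormZ {m : ℕ} (τ : Fin m → ℤ) : ℝ :=
  Real.sqrt (∑ i, ((τ i : ℝ)) ^ 2)

/-- The weight `w(τ,j) = ‖τ‖^(1/σ) + j^(1/(2nμ))`. -/
noncomputable def wgt (m n : ℕ) (σ μ : ℝ) (τ : Fin m → ℤ) (j : ℕ) : ℝ :=
  eNormZ τ ^ (1 / σ) + (j : ℝ) ^ (1 / (2 * n * μ))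

/-- GS-decay: `|a(τ,j)| ≤ C exp(-ε w(τ,j))` for some `C, ε > 0`. -/
def GSDecay (m n : ℕ) (σ μ : ℝ) (a : (Fin m → ℤ) → ℕ → ℂ) : Prop :=
  ∃ C > 0, ∃ ε > 0, ∀ τ j, ‖a τ j‖ ≤ C * Real.exp (-ε * wgt m n σ μ τ j)

/-- GS-growth: for all `ε > 0` there is `C > 0` with `|a(τ,j)| ≤ C exp(ε w(τ,j))`. -/
def GSGrowth (m n : ℕ) (σ μ : ℝ) (a : (Fin m → ℤ) → ℕ → ℂ) : Prop :=
  ∀ ε > 0, ∃ C > 0, ∀ τ j, ‖a τ j‖ ≤ C * Real.exp (ε * wgt m n σ μ τ j)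

/-- Symbol of the operator `L_r = Q_r(D_t) + d_r P(x,D_x)`: `σ_r(τ,j) = Q_r(τ) + d_r λ_j`. -/
noncomputable def symb {m ℓ : ℕ} (Q : Fin ℓ → MvPolynomial (Fin m) ℂ)
    (d : Fin ℓ → ℂ) (lam : ℕ → ℝ) (r : Fin ℓ) (τ : Fin m → ℤ) (j : ℕ) : ℂ :=
  MvPolynomial.eval (fun i => ((τ i : ℂ))) (Q r) + d r * (lam j : ℂ)

/-- `‖σ(τ,j)‖ = max_{1 ≤ r ≤ ℓ} |σ_r(τ,j)|`. -/
noncomputable def symbNorm {m ℓ : ℕ} (Q : Fin ℓ → MvPolynomial (Fin m) ℂ)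
    (d : Fin ℓ → ℂ) (lam : ℕ → ℝ) (τ : Fin m → ℤ) (j : ℕ) : ℝ :=
  ⨆ r : Fin ℓ, ‖symb Q d lam r τ j‖

/-- The Diophantine condition (DC). -/
def DioCond (m n ℓ : ℕ) (σ μ : ℝ) (Q : Fin ℓ → MvPolynomial (Fin m) ℂ)
    (d : Fin ℓ → ℂ) (lam : ℕ → ℝ) : Prop :=
  ∀ ε > 0, ∃ C > 0, ∀ τ j, symbNorm Q d lam τ j ≠ 0 →
    symbNorm Q d lam τ j ≥ C * Real.exp (-ε * wgt m n σ μ τ j)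

/-- Global hypoellipticity at the Fourier coefficient level. -/
def GloballyHypoelliptic (m n ℓ : ℕ) (σ μ : ℝ) (Q : Fin ℓ → MvPolynomial (Fin m) ℂ)
    (d : Fin ℓ → ℂ) (lam : ℕ → ℝ) : Prop :=
  ∀ u : (Fin m → ℤ) → ℕ → ℂ, GSGrowth m n σ μ u →
    (∀ r : Fin ℓ, GSDecay m n σ μ (fun τ j => symb Q d lam r τ j * u τ j)) →
    GSDecay m n σ μ u

/-- Admissible families (compatibility conditions). -/
def Admissible {m ℓ : ℕ} (Q : Fin ℓ → MvPolynomial (Fin m) ℂ) (d : Fin ℓ → ℂ)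
    (lam : ℕ → ℝ) (f : Fin ℓ → (Fin m → ℤ) → ℕ → ℂ) : Prop :=
  (∀ r s τ j, symb Q d lam r τ j * f s τ j = symb Q d lam s τ j * f r τ j) ∧
  (∀ r τ j, symb Q d lam r τ j = 0 → f r τ j = 0)

/-- Global solvability at the Fourier coefficient level. -/
def GloballySolvable (m n ℓ : ℕ) (σ μ : ℝ) (Q : Fin ℓ → MvPolynomial (Fin m) ℂ)
    (d : Fin ℓ → ℂ) (lam : ℕ → ℝ) : Prop :=
  ∀ f : Fin ℓ → (Fin m → ℤ) → ℕ → ℂ, Admissible Q d lam f →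
    (∀ r, GSGrowth m n σ μ (f r)) →
    ∃ u : (Fin m → ℤ) → ℕ → ℂ, GSGrowth m n σ μ u ∧
      ∀ r τ j, symb Q d lam r τ j * u τ j = f r τ j

section AuxLemmas

lemma wgt_nonneg (m n : ℕ) (σ μ : ℝ) (τ : Fin m → ℤ) (j : ℕ) :
    0 ≤ wgt m n σ μ τ j := by
  unfold wgt
  have h1 : (0:ℝ) ≤ eNormZ τ ^ (1 / σ) := Real.rpow_nonneg (Real.sqrt_nonneg _) _
  have h2 : (0:ℝ) ≤ (j : ℝ) ^ (1 / (2 * n * μ)) := Real.rpow_nonneg (by positivity) _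
  linarith

lemma symbNorm_nonneg {m ℓ : ℕ} (Q : Fin ℓ → MvPolynomial (Fin m) ℂ)
    (d : Fin ℓ → ℂ) (lam : ℕ → ℝ) (τ : Fin m → ℤ) (j : ℕ) :
    0 ≤ symbNorm Q d lam τ j :=
  Real.iSup_nonneg fun _ => norm_nonneg _

lemma abs_symb_le_symbNorm {m ℓ : ℕ} (Q : Fin ℓ → MvPolynomial (Fin m) ℂ)
    (d : Fin ℓ → ℂ) (lam : ℕ → ℝ) (r : Fin ℓ) (τ : Fin m → ℤ) (j : ℕ) :
    ‖symb Q d lam r τ j‖ ≤ symbNorm Q d lam τ j := by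
  unfold symbNorm
  exact le_ciSup (f := fun r : Fin ℓ => ‖symb Q d lam r τ j‖)
    (Set.Finite.bddAbove (Set.finite_range _)) r

lemma finite_wgt_le (m n : ℕ) (hn : 1 ≤ n) (σ μ : ℝ) (hσ : 1 ≤ σ) (hμ : 1 / 2 ≤ μ) (K : ℝ) :
    {p : (Fin m → ℤ) × ℕ | wgt m n σ μ p.1 p.2 ≤ K}.Finite := by
  have hσ0 : 0 < σ := by linarith
  have hn0 : (0:ℝ) < n := by exact_mod_cast hn
  have hμ0 : 0 < μ := by linarith
  have hq : 0 < 2 * (n:ℝ) * μ := by positivity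
  set B := K ^ σ with hB
  set J := ⌈K ^ (2 * (n:ℝ) * μ)⌉₊ with hJ
  apply Set.Finite.subset
    (Set.Finite.prod
      (Set.Finite.pi fun _ : Fin m => Set.finite_Icc (-⌈B⌉) ⌈B⌉)
      (Set.finite_Iic J))
  rintro ⟨τ, j⟩ hp
  simp only [Set.mem_setOf_eq, wgt] at hp
  have ha : 0 ≤ eNormZ τ := Real.sqrt_nonneg _
  have ha0 : (0:ℝ) ≤ eNormZ τ ^ (1 / σ) := Real.rpow_nonneg ha _
  have hb0 : (0:ℝ) ≤ (j : ℝ) ^ (1 / (2 * n * μ)) := Real.rpow_nonneg (by positivity) _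
  have h1 : eNormZ τ ^ (1 / σ) ≤ K := by linarith
  have h2 : (j : ℝ) ^ (1 / (2 * n * μ)) ≤ K := by linarith
  -- bound on the norm of τ
  have hxB : eNormZ τ ≤ B := by
    have hstep := Real.rpow_le_rpow ha0 h1 (le_of_lt hσ0)
    have hx : (eNormZ τ ^ (1 / σ)) ^ σ = eNormZ τ := by
      rw [← Real.rpow_mul ha, one_div, inv_mul_cancel₀ (ne_of_gt hσ0), Real.rpow_one]
    rw [hx] at hstep
    exact hstep
  have hτi : ∀ i, |(τ i : ℝ)| ≤ B := by
    intro i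
    have h3 : ((τ i : ℝ)) ^ 2 ≤ ∑ k, ((τ k : ℝ)) ^ 2 :=
      Finset.single_le_sum (f := fun k => ((τ k : ℝ)) ^ 2)
        (fun k _ => sq_nonneg _) (Finset.mem_univ i)
    calc |(τ i : ℝ)| = Real.sqrt (((τ i : ℝ)) ^ 2) := (Real.sqrt_sq_eq_abs _).symm
      _ ≤ Real.sqrt (∑ k, ((τ k : ℝ)) ^ 2) := Real.sqrt_le_sqrt h3
      _ = eNormZ τ := rfl
      _ ≤ B := hxB
  -- bound on j
  have hjB : (j : ℝ) ≤ K ^ (2 * (n:ℝ) * μ) := by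
    have hstep := Real.rpow_le_rpow hb0 h2 (le_of_lt hq)
    have hx : ((j : ℝ) ^ (1 / (2 * (n:ℝ) * μ))) ^ (2 * (n:ℝ) * μ) = (j : ℝ) := by
      rw [← Real.rpow_mul (by positivity : (0:ℝ) ≤ (j:ℝ)), one_div,
        inv_mul_cancel₀ (ne_of_gt hq), Real.rpow_one]
    rw [hx] at hstep
    exact hstep
  constructor
  · intro i _
    simp only [Set.mem_Icc]
    have h4 := hτi i
    rw [abs_le] at h4
    constructor
    · have : (-(⌈B⌉:ℝ)) ≤ (τ i : ℝ) := by
        have := Int.le_ceil B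
        linarith [h4.1]
      exact_mod_cast this
    · have : (τ i : ℝ) ≤ (⌈B⌉:ℝ) := le_trans h4.2 (Int.le_ceil B)
      exact_mod_cast this
  · simp only [Set.mem_Iic]
    have : (j : ℝ) ≤ (J : ℝ) := le_trans hjB (Nat.le_ceil _)
    exact_mod_cast this

lemma GH_implies_DC (m n ℓ : ℕ) (hn : 1 ≤ n)
    (σ μ : ℝ) (hσ : 1 ≤ σ) (hμ : 1 / 2 ≤ μ)
    (Q : Fin ℓ → MvPolynomial (Fin m) ℂ) (d : Fin ℓ → ℂ) (lam : ℕ → ℝ)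
    (hGH : GloballyHypoelliptic m n ℓ σ μ Q d lam) :
    DioCond m n ℓ σ μ Q d lam := by
  by_contra hfail
  unfold DioCond at hfail
  push_neg at hfail
  obtain ⟨ε, hε, hfail⟩ := hfail
  -- The counterexample sequence, encoded as an indicator function
  set u : (Fin m → ℤ) → ℕ → ℂ := fun τ j =>
    if symbNorm Q d lam τ j ≤ Real.exp (-ε * wgt m n σ μ τ j) then 1 else 0 with hu
  have huabs : ∀ τ j, ‖u τ j‖ ≤ 1 := by
    intro τ j
    simp only [hu]
    split_ifs <;> simp
  have hugrowth : GSGrowth m n σ μ u := by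
    intro ε' hε'
    refine ⟨1, one_pos, fun τ j => ?_⟩
    have : (1:ℝ) ≤ Real.exp (ε' * wgt m n σ μ τ j) :=
      Real.one_le_exp (mul_nonneg (le_of_lt hε') (wgt_nonneg m n σ μ τ j))
    calc ‖u τ j‖ ≤ 1 := huabs τ j
      _ ≤ 1 * Real.exp (ε' * wgt m n σ μ τ j) := by linarith
  have hudecay : ∀ r : Fin ℓ, GSDecay m n σ μ (fun τ j => symb Q d lam r τ j * u τ j) := by
    intro r
    refine ⟨1, one_pos, ε, hε, fun τ j => ?_⟩
    simp only [hu, map_mul]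
    split_ifs with h
    · simp only [map_one, mul_one]
      calc ‖symb Q d lam r τ j‖ ≤ symbNorm Q d lam τ j :=
          abs_symb_le_symbNorm Q d lam r τ j
        _ ≤ Real.exp (-ε * wgt m n σ μ τ j) := h
        _ = 1 * Real.exp (-ε * wgt m n σ μ τ j) := (one_mul _).symm
    · simp only [map_zero, mul_zero, norm_zero]
      positivity
  obtain ⟨C0, hC0, ε0, hε0, hdec⟩ := hGH u hugrowth hudecay
  -- all the points where u = 1 have bounded weight
  set K := max (Real.log C0 / ε0) 0 with hK
  have hSfin := finite_wgt_le m n hn σ μ hσ hμ K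
  set T := (hSfin.toFinset).filter (fun p => symbNorm Q d lam p.1 p.2 ≠ 0) with hT
  set c := (insert (1:ℝ) (T.image fun p => symbNorm Q d lam p.1 p.2)).min'
      (Finset.insert_nonempty 1 _) with hc
  have hcpos : 0 < c := by
    rw [hc, Finset.lt_min'_iff]
    intro b hb
    rcases Finset.mem_insert.mp hb with h | h
    · rw [h]; exact one_pos
    · obtain ⟨p, hpT, rfl⟩ := Finset.mem_image.mp h
      have hne := (Finset.mem_filter.mp hpT).2
      exact lt_of_le_of_ne (symbNorm_nonneg Q d lam p.1 p.2) (Ne.symm hne)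
  have hc1 : c ≤ 1 := Finset.min'_le _ _ (Finset.mem_insert_self 1 _)
  obtain ⟨τ, j, hne, hlt⟩ := hfail c hcpos
  -- u τ j = 1
  have hcond : symbNorm Q d lam τ j ≤ Real.exp (-ε * wgt m n σ μ τ j) := by
    have hexp : (0:ℝ) < Real.exp (-ε * wgt m n σ μ τ j) := Real.exp_pos _
    nlinarith
  have hu1 : u τ j = 1 := by simp only [hu]; rw [if_pos hcond]
  -- hence wgt τ j ≤ K
  have hwK : wgt m n σ μ τ j ≤ K := by
    have h5 := hdec τ j
    rw [hu1] at h5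
    simp only [norm_one] at h5
    have h6 : Real.exp (ε0 * wgt m n σ μ τ j) ≤ C0 := by
      have key : Real.exp (-ε0 * wgt m n σ μ τ j) * Real.exp (ε0 * wgt m n σ μ τ j) = 1 := by
        rw [← Real.exp_add]
        norm_num
      nlinarith [Real.exp_pos (ε0 * wgt m n σ μ τ j),
        Real.exp_pos (-ε0 * wgt m n σ μ τ j)]
    have h7 : ε0 * wgt m n σ μ τ j ≤ Real.log C0 :=
      (Real.le_log_iff_exp_le hC0).mpr h6
    have h8 : wgt m n σ μ τ j ≤ Real.log C0 / ε0 := by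
      rw [le_div_iff₀ hε0]
      linarith
    exact le_trans h8 (le_max_left _ _)
  -- so (τ,j) ∈ T and symbNorm ≥ c, contradiction
  have hpT : (τ, j) ∈ T := by
    rw [hT, Finset.mem_filter]
    exact ⟨hSfin.mem_toFinset.mpr hwK, hne⟩
  have hcle : c ≤ symbNorm Q d lam τ j :=
    Finset.min'_le _ _ (Finset.mem_insert_of_mem (Finset.mem_image_of_mem _ hpT))
  have hexp1 : Real.exp (-ε * wgt m n σ μ τ j) ≤ 1 := by
    rw [Real.exp_le_one_iff]
    have := wgt_nonneg m n σ μ τ j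
    nlinarith
  nlinarith

end AuxLemmas

/-- global hypoellipticity implies global solvability. -/
theorem statement2 (m n ℓ : ℕ) (hm : 1 ≤ m) (hn : 1 ≤ n) (hℓ : 1 ≤ ℓ)
    (σ μ : ℝ) (hσ : 1 ≤ σ) (hμ : 1 / 2 ≤ μ)
    (Q : Fin ℓ → MvPolynomial (Fin m) ℂ) (d : Fin ℓ → ℂ) (lam : ℕ → ℝ)
    (hGH : GloballyHypoelliptic m n ℓ σ μ Q d lam) :
    GloballySolvable m n ℓ σ μ Q d lam := by
  have hDC : DioCond m n ℓ σ μ Q d lam := GH_implies_DC m n ℓ hn σ μ hσ hμ Q d lam hGH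
  intro f hadm hgrow
  haveI : Nonempty (Fin ℓ) := ⟨⟨0, hℓ⟩⟩
  choose R hR using fun (τ : Fin m → ℤ) (j : ℕ) =>
    Finite.exists_max (fun r : Fin ℓ => ‖symb Q d lam r τ j‖)
  have hRmax : ∀ τ j, symbNorm Q d lam τ j = ‖symb Q d lam (R τ j) τ j‖ :=
    fun τ j => le_antisymm (ciSup_le (hR τ j)) (abs_symb_le_symbNorm Q d lam (R τ j) τ j)
  refine ⟨fun τ j => f (R τ j) τ j / symb Q d lam (R τ j) τ j, ?_, ?_⟩
  · -- GS-growth of u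
    intro ε hε
    obtain ⟨C1, hC1, hDCb⟩ := hDC (ε / 2) (by positivity)
    choose Cf hCf0 hCf using fun r => hgrow r (ε / 2) (by positivity)
    have hune : (Finset.univ : Finset (Fin ℓ)).Nonempty := Finset.univ_nonempty
    set C2 := Finset.univ.sup' hune Cf with hC2
    have hC2pos : 0 < C2 := by
      obtain ⟨r, hr⟩ := hune
      exact lt_of_lt_of_le (hCf0 r) (Finset.le_sup' Cf (Finset.mem_univ r))
    refine ⟨C2 / C1, by positivity, fun τ j => ?_⟩
    beta_reduce
    by_cases h0 : symb Q d lam (R τ j) τ j = 0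
    · rw [h0, div_zero, norm_zero]
      positivity
    · have hsn : symbNorm Q d lam τ j ≠ 0 := by
        rw [hRmax τ j]
        simpa using h0
      have hlow := hDCb τ j hsn
      rw [hRmax τ j] at hlow
      have hdenpos : (0:ℝ) < C1 * Real.exp (-(ε / 2) * wgt m n σ μ τ j) := by positivity
      have hnum : ‖f (R τ j) τ j‖ ≤ C2 * Real.exp (ε / 2 * wgt m n σ μ τ j) := by
        calc ‖f (R τ j) τ j‖
            ≤ Cf (R τ j) * Real.exp (ε / 2 * wgt m n σ μ τ j) := hCf (R τ j) τ j
          _ ≤ C2 * Real.exp (ε / 2 * wgt m n σ μ τ j) :=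
              mul_le_mul_of_nonneg_right (Finset.le_sup' Cf (Finset.mem_univ _))
                (le_of_lt (Real.exp_pos _))
      have hC2e : (0:ℝ) ≤ C2 * Real.exp (ε / 2 * wgt m n σ μ τ j) := by positivity
      calc ‖f (R τ j) τ j / symb Q d lam (R τ j) τ j‖
          = ‖f (R τ j) τ j‖ / ‖symb Q d lam (R τ j) τ j‖ :=
            norm_div _ _
        _ ≤ (C2 * Real.exp (ε / 2 * wgt m n σ μ τ j)) /
              (C1 * Real.exp (-(ε / 2) * wgt m n σ μ τ j)) :=
            div_le_div₀ hC2e hnum hdenpos hlow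
        _ = C2 / C1 * Real.exp (ε * wgt m n σ μ τ j) := by
            rw [mul_div_mul_comm, ← Real.exp_sub,
              show ε / 2 * wgt m n σ μ τ j - -(ε / 2) * wgt m n σ μ τ j
                = ε * wgt m n σ μ τ j by ring]
  · -- the equations
    intro r τ j
    beta_reduce
    by_cases h0 : symb Q d lam (R τ j) τ j = 0
    · have hr0 : symb Q d lam r τ j = 0 := by
        have h5 := hR τ j r
        rw [h0, norm_zero] at h5
        have h6 : ‖symb Q d lam r τ j‖ = 0 :=
          le_antisymm h5 (norm_nonneg _)
        simpa using h6
      rw [hr0, hadm.2 r τ j hr0, zero_mul]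
    · rw [mul_div_assoc', div_eq_iff h0]
      have := hadm.1 r (R τ j) τ j
      linear_combination this
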